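/- Consecutive words in the full Gray code of words of length n encode standard permutations of {±1,...,±n} that differ by an adjacent transposition; hence the full Gray code is an adjacent-transposition Gray code for all standard permutations. -/

import Mathlib

/-- The full Gray code of words: for `n = 0` the single empty word; words of
the length-`n` code at even (0-indexed, i.e. odd 1-indexed) positions are
extended by last letters `1, 2, …, 2(n+1)-1` in increasing order, those at odd
(0-indexed) positions by the same last letters in decreasing order. -/
def grayCode : ℕ → List (List ℕ)
  | 0 => [[]]
  | n+1 =>
      ((grayCode n).zipIdx.map (fun p =>
        if p.2 % 2 = 0 then
          (List.range (2*n + 1)).map (fun j => p.1 ++ [j + 1])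
        else
          ((List.range (2*n + 1)).map (fun j => p.1 ++ [j + 1])).reverse)).flatten

/-- The 1-indexed `i`-th letter of a word. -/
def wd (a : List ℕ) (i : ℕ) : ℕ := a.getD (i - 1) 0

/-- A word `a₁…aₙ` is arc-disconnected if there is a `k ≥ 2` with
`a_k = 2k-1` and `a_j ≥ 2k-1` for all `j > k`. -/
def ArcDiscL (a : List ℕ) : Prop :=
  ∃ k, 2 ≤ k ∧ k ≤ a.length ∧ wd a k = 2*k - 1 ∧
    ∀ j, k < j → j ≤ a.length → 2*k - 1 ≤ wd a j

/-- A sequence `π` lists each element of `{±1, …, ±n}` exactly once among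
positions `0, …, 2n-1`. -/
def IsSgnPerm (n : ℕ) (π : ℕ → ℤ) : Prop :=
  (Finset.range (2*n)).image π = (Finset.Icc (-(n:ℤ)) (n:ℤ)).erase 0

/-- A standard permutation of `{±1, …, ±n}`: each `i` appears before `-i`, and
the negative entries appear in the order `-1, -2, …, -n`. -/
def IsStdPerm (n : ℕ) (π : ℕ → ℤ) : Prop :=
  IsSgnPerm n π ∧
  (∀ k l, k < 2*n → l < 2*n → 0 < π k → π l = -π k → k < l) ∧
  (∀ k l, k < 2*n → l < 2*n → π k < 0 → π l < 0 → (k < l ↔ π l < π k))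

/-- Sign-connectedness: every proper nonempty initial segment contains exactly
one element of some pair `{j, -j}`. -/
def SignConnected (n : ℕ) (π : ℕ → ℤ) : Prop :=
  ∀ m, 1 ≤ m → m < 2*n → ∃ j : ℤ, 1 ≤ j ∧ j ≤ n ∧
    Xor' (∃ i < m, π i = j) (∃ i < m, π i = -j)

/-- The word `a` (a list, 1-indexed via `getD (k-1)`) encodes the standard
permutation `π` via arc diagrams: `a_k` is the (1-indexed) position of the
entry `k` among the entries of absolute value at most `k`. -/
def EncodesL (n : ℕ) (a : List ℕ) (π : ℕ → ℤ) : Prop :=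
  ∀ k, 1 ≤ k → k ≤ n → ∀ p < 2*n, π p = (k : ℤ) →
    wd a k = ((Finset.range (p+1)).filter (fun j => |π j| ≤ (k : ℤ))).card

/-- Two enumerations differ by an adjacent transposition: they agree except
for swapping two consecutive entries. -/
def AdjSwap (n : ℕ) (π ρ : ℕ → ℤ) : Prop :=
  ∃ p, p + 1 < 2*n ∧ ρ p = π (p+1) ∧ ρ (p+1) = π p ∧ π p ≠ π (p+1) ∧
    ∀ q < 2*n, q ≠ p → q ≠ p+1 → ρ q = π q

theorem flatten_getElem? {α : Type*} {L : List (List α)} {c : ℕ} (hc : 0 < c)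
    (h : ∀ x ∈ L, x.length = c) (m : ℕ) :
    L.flatten[m]? = (L[m / c]?).bind (fun blk => blk[m % c]?) := by
  induction L generalizing m with
  | nil => simp
  | cons x L ih =>
      have hx : x.length = c := h x (by simp)
      rcases lt_or_ge m c with hm | hm
      · have h0 : m / c = 0 := Nat.div_eq_of_lt hm
        have h1 : m % c = m := Nat.mod_eq_of_lt hm
        rw [List.flatten_cons, List.getElem?_append, if_pos (by omega), h0, h1]
        simp
      · have h0 : m / c = (m - c) / c + 1 := by
          rw [Nat.div_eq_sub_div hc hm]
        have h1 : m % c = (m - c) % c := by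
          conv_lhs => rw [Nat.mod_eq_sub_mod hm]
        rw [List.flatten_cons, List.getElem?_append, if_neg (by omega), h0, h1, hx,
          List.getElem?_cons_succ]
        exact ih (fun y hy => h y (by simp [hy])) (m - c)

theorem gray_succ (n m : ℕ) :
    (grayCode (n+1))[m]? = ((grayCode n)[m / (2*n+1)]?).map (fun w =>
      w ++ [if (m / (2*n+1)) % 2 = 0 then m % (2*n+1) + 1 else 2*n + 1 - m % (2*n+1)]) := by
  have hc : 0 < 2*n+1 := by omega
  have hlen : ∀ x ∈ ((grayCode n).zipIdx.map (fun p : List ℕ × ℕ =>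
        if p.2 % 2 = 0 then
          (List.range (2*n + 1)).map (fun j => p.1 ++ [j + 1])
        else
          ((List.range (2*n + 1)).map (fun j => p.1 ++ [j + 1])).reverse)), x.length = 2*n+1 := by
    intro x hx
    rcases List.mem_map.1 hx with ⟨p, _, rfl⟩
    by_cases h : p.2 % 2 = 0 <;> simp [h]
  show ((grayCode n).zipIdx.map _).flatten[m]? = _
  rw [flatten_getElem? hc hlen]
  rw [List.getElem?_map, List.getElem?_zipIdx, zero_add]
  set t := m / (2*n+1) with ht
  set s := m % (2*n+1) with hs
  have hslt : s < 2*n+1 := Nat.mod_lt _ hc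
  cases hG : (grayCode n)[t]? with
  | none => simp
  | some w =>
      simp only [Option.map_some, Option.bind_some, Option.map_map]
      by_cases hpar : t % 2 = 0
      · simp only [hpar, if_pos rfl, Option.bind_some, if_true]
        rw [List.getElem?_map, List.getElem?_range hslt]
        simp
      · simp only [hpar, if_neg hpar, Option.bind_some, if_false]
        rw [List.getElem?_reverse (by simp; omega)]
        rw [List.length_map, List.length_range]
        rw [List.getElem?_map, List.getElem?_range (by omega)]
        simp only [Option.map_some]
        congr 3
        omega

theorem wd_append_lt (w : List ℕ) (x : ℕ) {j : ℕ} (h1 : 1 ≤ j) (h2 : j ≤ w.length) :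
    wd (w ++ [x]) j = wd w j := by
  unfold wd
  rw [List.getD_eq_getElem?_getD, List.getD_eq_getElem?_getD,
    List.getElem?_append, if_pos (by omega)]

theorem wd_append_last (w : List ℕ) (x : ℕ) : wd (w ++ [x]) (w.length + 1) = x := by
  unfold wd
  simp

theorem gray_length : ∀ {n : ℕ} {a : List ℕ}, a ∈ grayCode n → a.length = n := by
  intro n
  induction n with
  | zero => intro a ha; simp [grayCode] at ha; simp [ha]
  | succ n ih =>
      intro a ha
      rw [grayCode, List.mem_flatten] at ha
      rcases ha with ⟨blk, hblk, hab⟩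
      rcases List.mem_map.1 hblk with ⟨⟨w, t⟩, hp, rfl⟩
      have hw : w ∈ grayCode n := by
        have := List.mem_zipIdx' hp
        rw [this.2]; exact List.getElem_mem _
      have hwl : w.length = n := ih hw
      by_cases h : t % 2 = 0 <;> simp [h] at hab <;>
        · rcases hab with ⟨j, _, rfl⟩; simp [hwl]

theorem gray_valid : ∀ {n : ℕ} {a : List ℕ}, a ∈ grayCode n →
    ∀ i, 1 ≤ i → i ≤ n → 1 ≤ wd a i ∧ wd a i ≤ 2*i - 1 := by
  intro n
  induction n with
  | zero => intro a _ i h1 h2; omega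
  | succ n ih =>
      intro a ha i h1 h2
      rw [grayCode, List.mem_flatten] at ha
      rcases ha with ⟨blk, hblk, hab⟩
      rcases List.mem_map.1 hblk with ⟨⟨w, t⟩, hp, rfl⟩
      have hw : w ∈ grayCode n := by
        have := List.mem_zipIdx' hp
        rw [this.2]; exact List.getElem_mem _
      have hwl : w.length = n := gray_length hw
      have key : ∃ j, j < 2*n+1 ∧ a = w ++ [j+1] := by
        by_cases h : t % 2 = 0 <;> simp [h] at hab <;>
          · rcases hab with ⟨j, hj, rfl⟩; exact ⟨j, by omega, rfl⟩
      rcases key with ⟨j, hj, rfl⟩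
      rcases Nat.lt_or_ge i (n+1) with hi | hi
      · rw [wd_append_lt _ _ h1 (by omega)]
        exact ih hw i h1 (by omega)
      · have : i = n + 1 := by omega
        subst this
        rw [show n + 1 = w.length + 1 by omega, wd_append_last]
        omega

theorem gray_adj : ∀ {n m : ℕ} {a b : List ℕ},
    (grayCode n)[m]? = some a → (grayCode n)[m+1]? = some b →
    ∃ k, 1 ≤ k ∧ k ≤ n ∧
      (∀ j, 1 ≤ j → j ≤ n → j ≠ k → wd a j = wd b j) ∧
      (wd b k = wd a k + 1 ∨ wd a k = wd b k + 1) ∧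
      (∀ j, k < j → j ≤ n → wd a j = 1 ∨ wd a j = 2*j - 1) := by
  intro n
  induction n with
  | zero =>
      intro m a b ha hb
      exfalso
      have := (List.getElem?_eq_some_iff.1 hb).1
      simp [grayCode] at this
  | succ n ih =>
      intro m a b ha hb
      have hc0 : 0 < 2*n+1 := by omega
      rw [gray_succ] at ha hb
      rcases Option.map_eq_some_iff.1 ha with ⟨w, hw, rfl⟩
      rcases Option.map_eq_some_iff.1 hb with ⟨w', hw', rfl⟩
      have hwl : w.length = n := gray_length (List.mem_of_getElem? hw)
      have hwl' : w'.length = n := gray_length (List.mem_of_getElem? hw')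
      have hmod : m % (2*n+1) < (2*n+1) := Nat.mod_lt _ hc0
      have hdm : (2*n+1) * (m / (2*n+1)) + m % (2*n+1) = m := Nat.div_add_mod m (2*n+1)
      rcases Nat.lt_or_ge (m % (2*n+1) + 1) (2*n+1) with hs | hs
      · -- same block
        have h1 : (m+1) / (2*n+1) = m / (2*n+1) := by
          rw [show m + 1 = (2*n+1) * (m/(2*n+1)) + (m % (2*n+1) + 1) by omega, Nat.mul_add_div hc0,
            Nat.div_eq_of_lt hs]
          omega
        have h2 : (m+1) % (2*n+1) = m % (2*n+1) + 1 := by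
          rw [show m + 1 = (2*n+1) * (m/(2*n+1)) + (m % (2*n+1) + 1) by omega, Nat.mul_add_mod,
            Nat.mod_eq_of_lt hs]
        have hww : w = w' := by
          rw [h1, hw] at hw'
          exact Option.some.inj hw'
        refine ⟨n+1, by omega, le_refl _, ?_, ?_, by omega⟩
        · intro j hj1 hj2 hj3
          rw [← hww, wd_append_lt _ _ hj1 (by omega), wd_append_lt _ _ hj1 (by omega)]
        · rw [← hww, show n + 1 = w.length + 1 by omega, wd_append_last, wd_append_last,
            h1, h2]
          by_cases hpar : (m/(2*n+1)) % 2 = 0 <;> simp [hpar] <;> omega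
      · -- block boundary
        have hs' : m % (2*n+1) + 1 = (2*n+1) := by omega
        have hmul : (2*n+1) * (m/(2*n+1) + 1) = (2*n+1)*(m/(2*n+1)) + (2*n+1) := by ring
        have h1 : (m+1) / (2*n+1) = m / (2*n+1) + 1 := by
          rw [show m + 1 = (2*n+1) * (m/(2*n+1) + 1) by omega, Nat.mul_div_cancel_left _ hc0]
        have h2 : (m+1) % (2*n+1) = 0 := by
          rw [show m + 1 = (2*n+1) * (m/(2*n+1) + 1) by omega, Nat.mul_mod_right]
        rcases ih hw (h1 ▸ hw') with ⟨k, hk1, hk2, hagree, hdiff, hext⟩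
        have hlast : wd (w ++ [if (m/(2*n+1)) % 2 = 0 then m % (2*n+1) + 1 else (2*n+1) - m % (2*n+1)])
              (n+1) = (if (m/(2*n+1)) % 2 = 0 then (2*n+1) else 1) := by
          rw [show n + 1 = w.length + 1 by omega, wd_append_last]
          by_cases hpar : (m/(2*n+1)) % 2 = 0 <;> simp [hpar] <;> omega
        have hlast' : wd (w' ++ [if ((m+1)/(2*n+1)) % 2 = 0 then (m+1) % (2*n+1) + 1 else (2*n+1) - (m+1) % (2*n+1)])
              (n+1) = (if (m/(2*n+1)) % 2 = 0 then (2*n+1) else 1) := by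
          rw [show n + 1 = w'.length + 1 by omega, wd_append_last, h1, h2]
          by_cases hpar : (m/(2*n+1)) % 2 = 0
          · have : (m/(2*n+1) + 1) % 2 = 1 := by omega
            simp [hpar, this]
          · have : (m/(2*n+1) + 1) % 2 = 0 := by omega
            simp [hpar, this]
        refine ⟨k, hk1, by omega, ?_, ?_, ?_⟩
        · intro j hj1 hj2 hj3
          rcases Nat.lt_or_ge j (n+1) with hj | hj
          · rw [wd_append_lt _ _ hj1 (by omega), wd_append_lt _ _ hj1 (by omega)]
            exact hagree j hj1 (by omega) hj3
          · have hj' : j = n + 1 := by omega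
            rw [hj', hlast, hlast']
        · rw [wd_append_lt _ _ hk1 (by omega), wd_append_lt _ _ hk1 (by omega)]
          exact hdiff
        · intro j hjk hjn
          rcases Nat.lt_or_ge j (n+1) with hj | hj
          · rw [wd_append_lt _ _ (by omega) (by omega)]
            exact hext j hjk (by omega)
          · have hj' : j = n + 1 := by omega
            rw [hj', hlast]
            by_cases hpar : (m/(2*n+1)) % 2 = 0 <;> simp [hpar] <;> omega

noncomputable def Vf (n : ℕ) : Finset ℤ := (Finset.Icc (-(n:ℤ)) n).erase 0

lemma mem_Vf {n : ℕ} {v : ℤ} : v ∈ Vf n ↔ v ≠ 0 ∧ |v| ≤ (n:ℤ) := by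
  rw [Vf, Finset.mem_erase, Finset.mem_Icc, ← abs_le]

lemma card_Vf (n : ℕ) : (Vf n).card = 2*n := by
  rw [Vf, Finset.card_erase_of_mem (by simp), Int.card_Icc]
  omega

noncomputable def ppos (n : ℕ) (π : ℕ → ℤ) (v : ℤ) : ℕ :=
  if h : ∃ q, q < 2*n ∧ π q = v then h.choose else 0

section sgn
variable {n : ℕ} {π : ℕ → ℤ}

lemma sgn_mem (hσ : IsSgnPerm n π) {q : ℕ} (hq : q < 2*n) : π q ∈ Vf n := by
  have : π q ∈ (Finset.range (2*n)).image π :=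
    Finset.mem_image_of_mem _ (Finset.mem_range.2 hq)
  rwa [hσ] at this

lemma sgn_surj (hσ : IsSgnPerm n π) {v : ℤ} (hv : v ∈ Vf n) : ∃ q, q < 2*n ∧ π q = v := by
  rw [Vf, ← hσ] at hv
  rcases Finset.mem_image.1 hv with ⟨q, hq, hqv⟩
  exact ⟨q, Finset.mem_range.1 hq, hqv⟩

lemma sgn_inj (hσ : IsSgnPerm n π) {q q' : ℕ} (hq : q < 2*n) (hq' : q' < 2*n)
    (h : π q = π q') : q = q' := by
  have hcard : ((Finset.range (2*n)).image π).card = (Finset.range (2*n)).card := by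
    rw [hσ, Finset.card_range]
    exact card_Vf n
  exact Finset.injOn_of_card_image_eq hcard (Finset.mem_coe.2 (Finset.mem_range.2 hq))
    (Finset.mem_coe.2 (Finset.mem_range.2 hq')) h

lemma ppos_spec (hσ : IsSgnPerm n π) {v : ℤ} (hv : v ∈ Vf n) :
    ppos n π v < 2*n ∧ π (ppos n π v) = v := by
  have h := sgn_surj hσ hv
  rw [ppos, dif_pos h]
  exact h.choose_spec

lemma ppos_eq (hσ : IsSgnPerm n π) {q : ℕ} (hq : q < 2*n) : ppos n π (π q) = q := by
  have hs := ppos_spec hσ (sgn_mem hσ hq)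
  exact sgn_inj hσ hs.1 hq hs.2

lemma ppos_inj (hσ : IsSgnPerm n π) {u v : ℤ} (hu : u ∈ Vf n) (hv : v ∈ Vf n)
    (h : ppos n π u = ppos n π v) : u = v := by
  have hsu := ppos_spec hσ hu
  have hsv := ppos_spec hσ hv
  rw [← hsu.2, ← hsv.2, h]

lemma count_transfer (hσ : IsSgnPerm n π) (P : ℕ) (pred : ℤ → Prop) [DecidablePred pred]
    (hP : P < 2*n) :
    ((Finset.range (P+1)).filter (fun q => pred (π q))).card
      = ((Vf n).filter (fun v => pred v ∧ ppos n π v ≤ P)).card := by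
  apply Finset.card_bij (fun q _ => π q)
  · intro q hq
    simp only [Finset.mem_filter, Finset.mem_range] at hq
    have hq2 : q < 2*n := by omega
    refine Finset.mem_filter.2 ⟨sgn_mem hσ hq2, hq.2, ?_⟩
    rw [ppos_eq hσ hq2]
    omega
  · intro q hq q' hq'
    simp only [Finset.mem_filter, Finset.mem_range] at hq hq'
    exact fun h => sgn_inj hσ (by omega) (by omega) h
  · intro v hv
    simp only [Finset.mem_filter] at hv
    refine ⟨ppos n π v, ?_, (ppos_spec hσ hv.1).2⟩
    simp only [Finset.mem_filter, Finset.mem_range]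
    refine ⟨by omega, ?_⟩
    rw [(ppos_spec hσ hv.1).2]
    exact hv.2.1

lemma ppos_rank (hσ : IsSgnPerm n π) {v : ℤ} (hv : v ∈ Vf n) :
    ((Vf n).filter (fun u => ppos n π u < ppos n π v)).card = ppos n π v := by
  have h : ((Vf n).filter (fun u => ppos n π u < ppos n π v)).card
      = (Finset.range (ppos n π v)).card := by
    apply Finset.card_bij (fun u _ => ppos n π u)
    · intro u hu
      simp only [Finset.mem_filter] at hu
      exact Finset.mem_range.2 hu.2
    · intro u hu u' hu'
      simp only [Finset.mem_filter] at hu hu'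
      exact fun h => ppos_inj hσ hu.1 hu'.1 h
    · intro q hq
      rw [Finset.mem_range] at hq
      have hq2 : q < 2*n := lt_trans hq (ppos_spec hσ hv).1
      refine ⟨π q, Finset.mem_filter.2 ⟨sgn_mem hσ hq2, ?_⟩, ppos_eq hσ hq2⟩
      rw [ppos_eq hσ hq2]
      exact hq
  rw [h, Finset.card_range]

end sgn

section std
variable {n : ℕ} {π : ℕ → ℤ}

lemma pos_pair (hst : IsStdPerm n π) {i : ℤ} (h1 : 1 ≤ i) (h2 : i ≤ n) :
    ppos n π i < ppos n π (-i) := by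
  obtain ⟨hσ, h2', _⟩ := hst
  have hi : (i : ℤ) ∈ Vf n := mem_Vf.2 ⟨by omega, by rw [abs_of_pos (by omega)]; omega⟩
  have hni : (-i : ℤ) ∈ Vf n := mem_Vf.2 ⟨by omega, by rw [abs_neg, abs_of_pos (by omega)]; omega⟩
  have hsi := ppos_spec hσ hi
  have hsni := ppos_spec hσ hni
  exact h2' _ _ hsi.1 hsni.1 (by rw [hsi.2]; omega) (by rw [hsi.2, hsni.2])

lemma pos_neg_mono (hst : IsStdPerm n π) {i j : ℤ} (h1 : 1 ≤ i) (h2 : i < j) (h3 : j ≤ n) :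
    ppos n π (-i) < ppos n π (-j) := by
  obtain ⟨hσ, _, h3'⟩ := hst
  have hni : (-i : ℤ) ∈ Vf n := mem_Vf.2 ⟨by omega, by rw [abs_neg, abs_of_pos (by omega)]; omega⟩
  have hnj : (-j : ℤ) ∈ Vf n := mem_Vf.2 ⟨by omega, by rw [abs_neg, abs_of_pos (by omega)]; omega⟩
  have hsi := ppos_spec hσ hni
  have hsj := ppos_spec hσ hnj
  exact (h3' _ _ hsi.1 hsj.1 (by rw [hsi.2]; omega) (by rw [hsj.2]; omega)).2
    (by rw [hsi.2, hsj.2]; omega)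

lemma pos_max (hst : IsStdPerm n π) {k : ℤ} {v : ℤ} (hk1 : 1 ≤ k) (hk2 : k ≤ (n:ℤ))
    (hv : v ∈ Vf n) (hvk : |v| ≤ k) (hne : v ≠ -k) : ppos n π v < ppos n π (-k) := by
  rcases lt_or_gt_of_ne (mem_Vf.1 hv).1 with hvneg | hvpos
  · -- v = -i with 1 ≤ i < k  (v ≠ -k)
    have h1 : 1 ≤ -v := by omega
    have h2 : -v < k := by
      rcases lt_or_eq_of_le (abs_le.1 hvk).1 with h | h
      · omega
      · exact absurd (by omega : v = -k) hne
    have := pos_neg_mono hst h1 h2 (by omega)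
    rwa [neg_neg] at this
  · -- v = i positive, i ≤ k
    have hvk' : v ≤ k := by rw [abs_of_pos hvpos] at hvk; omega
    rcases lt_or_eq_of_le hvk' with h | h
    · exact lt_trans (pos_pair hst (by omega) (by omega))
        (pos_neg_mono hst (by omega) h (by omega))
    · subst h
      exact pos_pair hst hk1 hk2
end std

section det
variable {n : ℕ} {π ρ : ℕ → ℤ}

lemma nat_mem_Vf {n k : ℕ} (hk1 : 1 ≤ k) (hk2 : k ≤ n) : ((k:ℤ)) ∈ Vf n :=
  mem_Vf.2 ⟨by exact_mod_cast Nat.one_le_iff_ne_zero.1 hk1,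
    by rw [abs_of_nonneg (by positivity)]; exact_mod_cast hk2⟩

lemma neg_nat_mem_Vf {n k : ℕ} (hk1 : 1 ≤ k) (hk2 : k ≤ n) : (-(k:ℤ)) ∈ Vf n :=
  mem_Vf.2 ⟨by simp; exact_mod_cast Nat.one_le_iff_ne_zero.1 hk1,
    by rw [abs_neg, abs_of_nonneg (by positivity)]; exact_mod_cast hk2⟩

lemma encodes_card (hst : IsStdPerm n π) {a : List ℕ} (hea : EncodesL n a π)
    {k : ℕ} (hk1 : 1 ≤ k) (hk2 : k ≤ n) :
    wd a k = 1 + ((Vf n).filter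
      (fun v => |v| < (k:ℤ) ∧ ppos n π v < ppos n π (k:ℤ))).card := by
  classical
  have hσ := hst.1
  have hkV : ((k:ℤ)) ∈ Vf n := nat_mem_Vf hk1 hk2
  have hp := ppos_spec hσ hkV
  set p := ppos n π (k:ℤ) with hpdef
  have h1 : wd a k = ((Finset.range (p+1)).filter (fun j => |π j| ≤ (k:ℤ))).card :=
    hea k hk1 hk2 p hp.1 hp.2
  rw [h1, count_transfer hσ p (fun v => |v| ≤ (k:ℤ)) hp.1]
  have hset : (Vf n).filter (fun v => |v| ≤ (k:ℤ) ∧ ppos n π v ≤ p)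
      = insert ((k:ℤ)) ((Vf n).filter (fun v => |v| < (k:ℤ) ∧ ppos n π v < p)) := by
    ext v
    simp only [Finset.mem_filter, Finset.mem_insert]
    constructor
    · rintro ⟨hvV, hvk, hvp⟩
      by_cases hv : v = (k:ℤ)
      · exact Or.inl hv
      · right
        have hne : ppos n π v ≠ p := by
          intro h
          exact hv (ppos_inj hσ hvV hkV (by rw [h]))
        have hvnk : v ≠ -(k:ℤ) := by
          intro h
          have := pos_pair hst (i := (k:ℤ)) (by exact_mod_cast hk1) (by exact_mod_cast hk2)
          rw [← h] at this
          omega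
        refine ⟨hvV, ?_, by omega⟩
        rcases abs_cases v with ⟨he, _⟩ | ⟨he, _⟩
        · rcases lt_or_eq_of_le hvk with hh | hh
          · omega
          · exact absurd (by omega : v = (k:ℤ)) hv
        · rcases lt_or_eq_of_le hvk with hh | hh
          · omega
          · exact absurd (by omega : v = -(k:ℤ)) hvnk
    · rintro (rfl | ⟨hvV, hvk, hvp⟩)
      · exact ⟨hkV, le_of_eq (abs_of_nonneg (by positivity)), by omega⟩
      · exact ⟨hvV, by omega, by omega⟩
  have hnotmem : ((k:ℤ)) ∉ (Vf n).filter (fun v => |v| < (k:ℤ) ∧ ppos n π v < p) := by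
    simp only [Finset.mem_filter]
    push_neg
    intro _ h2
    omega
  rw [hset, Finset.card_insert_of_notMem hnotmem]
  omega

theorem word_determines (hst : IsStdPerm n π) (hst' : IsStdPerm n ρ) {a : List ℕ}
    (hea : EncodesL n a π) (hea' : EncodesL n a ρ) : ∀ q < 2*n, π q = ρ q := by
  classical
  have hσ := hst.1
  have hσ' := hst'.1
  have key : ∀ k : ℕ, k ≤ n → ∀ u v, u ∈ Vf n → v ∈ Vf n → |u| ≤ (k:ℤ) → |v| ≤ (k:ℤ) →
      (ppos n π u < ppos n π v ↔ ppos n ρ u < ppos n ρ v) := by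
    intro k
    induction k with
    | zero =>
        intro _ u v hu _ hu0 _
        exact absurd (abs_nonpos_iff.1 (by exact_mod_cast hu0)) (mem_Vf.1 hu).1
    | succ k ih =>
        intro hk1 u v hu hv huk hvk
        have hKV : (((k+1:ℕ)):ℤ) ∈ Vf n := nat_mem_Vf (by omega) hk1
        have hcard : ((Vf n).filter (fun v => |v| < ((k+1:ℕ):ℤ) ∧
              ppos n π v < ppos n π ((k+1:ℕ):ℤ))).card
            = ((Vf n).filter (fun v => |v| < ((k+1:ℕ):ℤ) ∧
              ppos n ρ v < ppos n ρ ((k+1:ℕ):ℤ))).card := by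
          have e1 := encodes_card hst hea (k := k+1) (by omega) hk1
          have e2 := encodes_card hst' hea' (k := k+1) (by omega) hk1
          omega
        -- the star property
        have star : ∀ w, w ∈ Vf n → |w| ≤ (k:ℤ) →
            (ppos n π w < ppos n π ((k+1:ℕ):ℤ) ↔ ppos n ρ w < ppos n ρ ((k+1:ℕ):ℤ)) := by
          intro w hw hwk
          have hSeq : (Vf n).filter (fun u' => |u'| < ((k+1:ℕ):ℤ) ∧ ppos n π u' < ppos n π w)
              = (Vf n).filter (fun u' => |u'| < ((k+1:ℕ):ℤ) ∧ ppos n ρ u' < ppos n ρ w) := by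
            ext u'
            simp only [Finset.mem_filter]
            constructor
            · rintro ⟨h1, h2, h3⟩
              exact ⟨h1, h2, (ih (by omega) u' w h1 hw (by push_cast at h2 ⊢; omega) hwk).1 h3⟩
            · rintro ⟨h1, h2, h3⟩
              exact ⟨h1, h2, (ih (by omega) u' w h1 hw (by push_cast at h2 ⊢; omega) hwk).2 h3⟩
          have hwK : w ≠ ((k+1:ℕ):ℤ) := by
            intro h
            rw [h] at hwk
            rw [abs_of_nonneg (by positivity)] at hwk
            push_cast at hwk
            omega
          have down : ∀ (τ : ℕ → ℤ), IsSgnPerm n τ →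
              (ppos n τ w < ppos n τ ((k+1:ℕ):ℤ) ↔
               ((Vf n).filter (fun u' => |u'| < ((k+1:ℕ):ℤ) ∧ ppos n τ u' < ppos n τ w)).card
                 < ((Vf n).filter (fun u' => |u'| < ((k+1:ℕ):ℤ) ∧
                     ppos n τ u' < ppos n τ ((k+1:ℕ):ℤ))).card) := by
            intro τ hτ
            constructor
            · intro hlt
              have hwT : w ∈ (Vf n).filter (fun u' => |u'| < ((k+1:ℕ):ℤ) ∧
                  ppos n τ u' < ppos n τ ((k+1:ℕ):ℤ)) :=
                Finset.mem_filter.2 ⟨hw, by push_cast; omega, hlt⟩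
              have hsub : (Vf n).filter (fun u' => |u'| < ((k+1:ℕ):ℤ) ∧ ppos n τ u' < ppos n τ w)
                  ⊆ ((Vf n).filter (fun u' => |u'| < ((k+1:ℕ):ℤ) ∧
                      ppos n τ u' < ppos n τ ((k+1:ℕ):ℤ))).erase w := by
                intro u' hu'
                simp only [Finset.mem_filter, Finset.mem_erase] at hu' ⊢
                refine ⟨?_, hu'.1, hu'.2.1, by omega⟩
                intro h
                rw [h] at hu'
                omega
              calc ((Vf n).filter _).card ≤ _ := Finset.card_le_card hsub
                _ < _ := Finset.card_erase_lt_of_mem hwT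
            · intro hcard'
              by_contra hge
              push_neg at hge
              have hne : ppos n τ w ≠ ppos n τ ((k+1:ℕ):ℤ) := by
                intro h
                exact hwK (ppos_inj hτ hw hKV h)
              have hsub : (Vf n).filter (fun u' => |u'| < ((k+1:ℕ):ℤ) ∧
                    ppos n τ u' < ppos n τ ((k+1:ℕ):ℤ))
                  ⊆ (Vf n).filter (fun u' => |u'| < ((k+1:ℕ):ℤ) ∧ ppos n τ u' < ppos n τ w) := by
                intro u' hu'
                simp only [Finset.mem_filter] at hu' ⊢
                exact ⟨hu'.1, hu'.2.1, by omega⟩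
              exact absurd (Finset.card_le_card hsub) (by omega)
          rw [down π hσ, down ρ hσ', hSeq, hcard]
        -- now the case analysis
        by_cases huK : u = -((k+1:ℕ):ℤ)
        · by_cases hvK : v = -((k+1:ℕ):ℤ)
          · rw [huK, hvK]
            exact iff_of_false (lt_irrefl _) (lt_irrefl _)
          · have h1 : ppos n π v < ppos n π (-((k+1:ℕ):ℤ)) :=
              pos_max hst (by push_cast; omega) (by exact_mod_cast hk1) hv
                (by push_cast at hvk ⊢; omega) hvK
            have h2 : ppos n ρ v < ppos n ρ (-((k+1:ℕ):ℤ)) :=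
              pos_max hst' (by push_cast; omega) (by exact_mod_cast hk1) hv
                (by push_cast at hvk ⊢; omega) hvK
            rw [huK]
            exact iff_of_false (by omega) (by omega)
        · by_cases hvK : v = -((k+1:ℕ):ℤ)
          · have h1 : ppos n π u < ppos n π (-((k+1:ℕ):ℤ)) :=
              pos_max hst (by push_cast; omega) (by exact_mod_cast hk1) hu
                (by push_cast at huk ⊢; omega) huK
            have h2 : ppos n ρ u < ppos n ρ (-((k+1:ℕ):ℤ)) :=
              pos_max hst' (by push_cast; omega) (by exact_mod_cast hk1) hu
                (by push_cast at huk ⊢; omega) huK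
            rw [hvK]
            exact iff_of_true h1 h2
          · by_cases huK' : u = ((k+1:ℕ):ℤ)
            · by_cases hvK' : v = ((k+1:ℕ):ℤ)
              · rw [huK', hvK']
                exact iff_of_false (lt_irrefl _) (lt_irrefl _)
              · have hvk' : |v| ≤ (k:ℤ) := by
                  rcases abs_cases v with ⟨he, _⟩ | ⟨he, _⟩ <;>
                    push_cast at hvk hvK hvK' ⊢ <;> omega
                have hne1 : ppos n π v ≠ ppos n π ((k+1:ℕ):ℤ) :=
                  fun h => hvK' (ppos_inj hσ hv hKV h)
                have hne2 : ppos n ρ v ≠ ppos n ρ ((k+1:ℕ):ℤ) :=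
                  fun h => hvK' (ppos_inj hσ' hv hKV h)
                have hs := star v hv hvk'
                have t1 : ppos n π ((k+1:ℕ):ℤ) < ppos n π v ↔
                    ¬(ppos n π v < ppos n π ((k+1:ℕ):ℤ)) := by
                  constructor <;> intro h' <;> omega
                have t2 : ppos n ρ ((k+1:ℕ):ℤ) < ppos n ρ v ↔
                    ¬(ppos n ρ v < ppos n ρ ((k+1:ℕ):ℤ)) := by
                  constructor <;> intro h' <;> omega
                rw [huK', t1, t2]
                exact not_congr hs
            · by_cases hvK' : v = ((k+1:ℕ):ℤ)
              · have huk' : |u| ≤ (k:ℤ) := by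
                  rcases abs_cases u with ⟨he, _⟩ | ⟨he, _⟩ <;>
                    push_cast at huk huK huK' ⊢ <;> omega
                rw [hvK']
                exact star u hu huk'
              · have huk' : |u| ≤ (k:ℤ) := by
                  rcases abs_cases u with ⟨he, _⟩ | ⟨he, _⟩ <;>
                    push_cast at huk huK huK' ⊢ <;> omega
                have hvk' : |v| ≤ (k:ℤ) := by
                  rcases abs_cases v with ⟨he, _⟩ | ⟨he, _⟩ <;>
                    push_cast at hvk hvK hvK' ⊢ <;> omega
                exact ih (by omega) u v hu hv huk' hvk'
  intro q hq
  have hvV := sgn_mem hσ hq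
  have hfe : (Vf n).filter (fun u => ppos n π u < ppos n π (π q))
      = (Vf n).filter (fun u => ppos n ρ u < ppos n ρ (π q)) := by
    ext u
    simp only [Finset.mem_filter]
    constructor
    · rintro ⟨h1, h2⟩
      exact ⟨h1, (key n le_rfl u (π q) h1 hvV (mem_Vf.1 h1).2 (mem_Vf.1 hvV).2).1 h2⟩
    · rintro ⟨h1, h2⟩
      exact ⟨h1, (key n le_rfl u (π q) h1 hvV (mem_Vf.1 h1).2 (mem_Vf.1 hvV).2).2 h2⟩
  have h1 : ppos n ρ (π q) = ppos n π (π q) := by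
    rw [← ppos_rank hσ hvV, ← ppos_rank hσ' hvV, hfe]
  have h2 : ppos n π (π q) = q := ppos_eq hσ hq
  have h3 := (ppos_spec hσ' hvV).2
  rw [h1, h2] at h3
  exact h3.symm

end det

lemma card_absle {n j : ℕ} (hj : j ≤ n) :
    ((Vf n).filter (fun v => |v| ≤ (j:ℤ))).card = 2*j := by
  have hVj : (Vf n).filter (fun v => |v| ≤ (j:ℤ)) = Vf j := by
    ext v
    simp only [Finset.mem_filter, mem_Vf]
    constructor
    · rintro ⟨⟨h0, _⟩, hk'⟩
      exact ⟨h0, hk'⟩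
    · rintro ⟨h0, hk'⟩
      exact ⟨⟨h0, le_trans hk' (by exact_mod_cast hj)⟩, hk'⟩
  rw [hVj, card_Vf]

section main
variable {n : ℕ} {πa πb : ℕ → ℤ} {a b : List ℕ}

theorem main_swap (hπa : IsStdPerm n πa) (hea : EncodesL n a πa)
    (hπb : IsStdPerm n πb) (heb : EncodesL n b πb)
    {k : ℕ} (hk1 : 1 ≤ k) (hk2 : k ≤ n)
    (hagree : ∀ j, 1 ≤ j → j ≤ n → j ≠ k → wd a j = wd b j)
    (hbk : wd b k = wd a k + 1)
    (hbub : wd b k ≤ 2*k - 1)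
    (hext : ∀ j, k < j → j ≤ n → wd a j = 1 ∨ wd a j = 2*j - 1) :
    AdjSwap n πa πb := by
  classical
  have hσ := hπa.1
  have hkV : ((k:ℤ)) ∈ Vf n := nat_mem_Vf hk1 hk2
  have hp := ppos_spec hσ hkV
  set p := ppos n πa (k:ℤ) with hpdef
  have hr : wd a k = ((Finset.range (p+1)).filter (fun j => |πa j| ≤ (k:ℤ))).card :=
    hea k hk1 hk2 p hp.1 hp.2
  have hrv : wd a k = ((Vf n).filter (fun v => |v| ≤ (k:ℤ) ∧ ppos n πa v ≤ p)).card := by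
    rw [hr, count_transfer hσ p (fun v => |v| ≤ (k:ℤ)) hp.1]
  have hak : wd a k ≤ 2*k - 2 := by omega
  have hcard2k : ((Vf n).filter (fun v => |v| ≤ (k:ℤ))).card = 2*k := card_absle hk2
  -- existence of an element of small abs after p
  have hex : ∃ q', p < q' ∧ q' < 2*n ∧ |πa q'| ≤ (k:ℤ) := by
    by_contra hno
    push_neg at hno
    have hsub : (Vf n).filter (fun v => |v| ≤ (k:ℤ))
        ⊆ (Vf n).filter (fun v => |v| ≤ (k:ℤ) ∧ ppos n πa v ≤ p) := by
      intro v hv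
      rw [Finset.mem_filter] at hv ⊢
      refine ⟨hv.1, hv.2, ?_⟩
      by_contra hgt
      push_neg at hgt
      have hs := ppos_spec hσ hv.1
      have := hno (ppos n πa v) hgt hs.1
      rw [hs.2] at this
      omega
    have := Finset.card_le_card hsub
    omega
  set q0 := Nat.find hex with hq0def
  have hq0 := Nat.find_spec hex
  rw [← hq0def] at hq0
  have hclaim : q0 = p + 1 := by
    by_contra hne
    have hq0p : p + 1 < q0 := by omega
    -- no positive entries strictly between p and q0
    have hnopos : ∀ t, p < t → t < q0 → ¬(0 < πa t) := by
      intro t ht1 ht2 hpos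
      have ht2n : t < 2*n := by omega
      have habs : (k:ℤ) < |πa t| := by
        by_contra hle
        push_neg at hle
        exact Nat.find_min hex ht2 ⟨ht1, ht2n, hle⟩
      have hmemV := sgn_mem hσ ht2n
      have hn' : |πa t| ≤ (n:ℤ) := (mem_Vf.1 hmemV).2
      set i : ℕ := (πa t).toNat with hidef
      have hti : πa t = (i:ℤ) := by
        rw [hidef]
        exact (Int.toNat_of_nonneg (by omega)).symm
      have habs' : |πa t| = (i:ℤ) := by
        rw [hti, abs_of_nonneg (by positivity)]
      have hik1 : k < i := by
        rw [habs'] at habs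
        exact_mod_cast habs
      have hikn : i ≤ n := by
        rw [habs'] at hn'
        exact_mod_cast hn'
      have hwi := hea i (by omega) hikn t ht2n hti
      rcases hext i hik1 hikn with h1 | h1
      · have hpair : ({p, t} : Finset ℕ)
            ⊆ (Finset.range (t+1)).filter (fun j => |πa j| ≤ (i:ℤ)) := by
          intro q hq
          simp only [Finset.mem_insert, Finset.mem_singleton] at hq
          rcases hq with rfl | rfl
          · refine Finset.mem_filter.2 ⟨Finset.mem_range.2 (by omega), ?_⟩
            rw [hp.2, abs_of_nonneg (by positivity)]
            exact_mod_cast (by omega : k ≤ i)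
          · refine Finset.mem_filter.2 ⟨Finset.mem_range.2 (by omega), ?_⟩
            rw [habs']
        have h2 := Finset.card_le_card hpair
        rw [Finset.card_pair (by omega)] at h2
        omega
      · rw [count_transfer hσ t (fun v => |v| ≤ (i:ℤ)) ht2n] at hwi
        have hpos_i : ppos n πa ((i:ℤ)) = t := by
          rw [← hti]
          exact ppos_eq hσ ht2n
        have hyV : πa q0 ∈ Vf n := sgn_mem hσ hq0.2.1
        have hyS : ppos n πa (πa q0) = q0 := ppos_eq hσ hq0.2.1
        have hz_pos : t < ppos n πa (-(i:ℤ)) := by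
          have := pos_pair hπa (i := (i:ℤ)) (by exact_mod_cast (by omega : 1 ≤ i))
            (by exact_mod_cast hikn)
          rwa [hpos_i] at this
        have hzV : (-(i:ℤ)) ∈ Vf n := neg_nat_mem_Vf (by omega) hikn
        have hSsubT : (Vf n).filter (fun v => |v| ≤ (i:ℤ) ∧ ppos n πa v ≤ t)
            ⊆ (Vf n).filter (fun v => |v| ≤ (i:ℤ)) := by
          intro v hv
          rw [Finset.mem_filter] at hv ⊢
          exact ⟨hv.1, hv.2.1⟩
        have hpairT : ({πa q0, -(i:ℤ)} : Finset ℤ)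
            ⊆ (Vf n).filter (fun v => |v| ≤ (i:ℤ))
              \ (Vf n).filter (fun v => |v| ≤ (i:ℤ) ∧ ppos n πa v ≤ t) := by
          intro v hv
          simp only [Finset.mem_insert, Finset.mem_singleton] at hv
          rcases hv with rfl | rfl
          · rw [Finset.mem_sdiff, Finset.mem_filter, Finset.mem_filter]
            refine ⟨⟨hyV, le_trans hq0.2.2 (by exact_mod_cast (by omega : k ≤ i))⟩, ?_⟩
            rintro ⟨_, _, hle⟩
            rw [hyS] at hle
            omega
          · rw [Finset.mem_sdiff, Finset.mem_filter, Finset.mem_filter]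
            refine ⟨⟨hzV, by rw [abs_neg, abs_of_nonneg (by positivity)]⟩, ?_⟩
            rintro ⟨_, _, hle⟩
            omega
        have hyz : πa q0 ≠ -(i:ℤ) := by
          intro h
          have := hq0.2.2
          rw [h, abs_neg, abs_of_nonneg (by positivity)] at this
          have : (i:ℤ) ≤ (k:ℤ) := this
          exact absurd (by exact_mod_cast this : i ≤ k) (by omega)
        have h2 := Finset.card_le_card hpairT
        rw [Finset.card_pair hyz, Finset.card_sdiff_of_subset hSsubT, ← hwi, h1,
          card_absle hikn] at h2
        omega
    -- the entry at p+1 must be negative, leading to a contradiction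
    have hp1n : p + 1 < 2*n := by omega
    have hp1V := sgn_mem hσ hp1n
    have hπp1 : πa (p+1) < 0 := by
      rcases lt_trichotomy (πa (p+1)) 0 with h | h | h
      · exact h
      · exact absurd h (mem_Vf.1 hp1V).1
      · exact absurd h (hnopos (p+1) (by omega) (by omega))
    set i : ℕ := (-πa (p+1)).toNat with hidef
    have hti : πa (p+1) = -(i:ℤ) := by
      rw [hidef]
      have := Int.toNat_of_nonneg (by omega : (0:ℤ) ≤ -πa (p+1))
      omega
    have habs' : |πa (p+1)| = (i:ℤ) := by
      rw [hti, abs_neg, abs_of_nonneg (by positivity)]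
    have hikn : i ≤ n := by
      have := (mem_Vf.1 hp1V).2
      rw [habs'] at this
      exact_mod_cast this
    have hik1 : k < i := by
      by_contra hle
      push_neg at hle
      refine Nat.find_min hex hq0p ⟨by omega, hp1n, ?_⟩
      rw [habs']
      exact_mod_cast hle
    have hpni : ppos n πa (-(i:ℤ)) = p+1 := by
      rw [← hti]
      exact ppos_eq hσ hp1n
    have hyV : πa q0 ∈ Vf n := sgn_mem hσ hq0.2.1
    have hyS : ppos n πa (πa q0) = q0 := ppos_eq hσ hq0.2.1
    rcases lt_trichotomy (πa q0) 0 with hy | hy | hy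
    · set m : ℕ := (-πa q0).toNat with hmdef
      have htm : πa q0 = -(m:ℤ) := by
        rw [hmdef]
        have := Int.toNat_of_nonneg (by omega : (0:ℤ) ≤ -πa q0)
        omega
      have hm1 : 1 ≤ m := by
        have := (mem_Vf.1 hyV).1
        rw [htm] at this
        by_contra hm0
        push_neg at hm0
        interval_cases m
        · simp at this
      have hmk : (m:ℤ) ≤ (k:ℤ) := by
        have := hq0.2.2
        rwa [htm, abs_neg, abs_of_nonneg (by positivity)] at this
      have := pos_neg_mono hπa (i := (m:ℤ)) (j := (i:ℤ)) (by exact_mod_cast hm1)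
        (by exact_mod_cast (by omega : (m:ℤ) < (i:ℤ))) (by exact_mod_cast hikn)
      rw [hpni, ← htm, hyS] at this
      omega
    · exact absurd hy (mem_Vf.1 hyV).1
    · set m : ℕ := (πa q0).toNat with hmdef
      have htm : πa q0 = (m:ℤ) := by
        rw [hmdef]
        exact (Int.toNat_of_nonneg (by omega)).symm
      have hm1 : 1 ≤ m := by
        have : (0:ℤ) < (m:ℤ) := by rw [← htm]; exact hy
        exact_mod_cast this
      have hmk : (m:ℤ) ≤ (k:ℤ) := by
        have := hq0.2.2
        rwa [htm, abs_of_nonneg (by positivity)] at this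
      have h1 := pos_pair hπa (i := (m:ℤ)) (by exact_mod_cast hm1)
        (by exact_mod_cast (by omega : m ≤ n))
      have h2 := pos_neg_mono hπa (i := (m:ℤ)) (j := (i:ℤ)) (by exact_mod_cast hm1)
        (by exact_mod_cast (by omega : (m:ℤ) < (i:ℤ))) (by exact_mod_cast hikn)
      rw [hpni] at h2
      rw [← htm] at h1 h2
      rw [hyS] at h1
      omega
  -- q0 = p+1 : the swap partner
  have hp1n : p + 1 < 2*n := by omega
  have hxabs : |πa (p+1)| ≤ (k:ℤ) := by
    have := hq0.2.2
    rwa [hclaim] at this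
  have hxV : πa (p+1) ∈ Vf n := sgn_mem hσ hp1n
  have hxk : πa (p+1) ≠ (k:ℤ) := by
    intro h
    have h2 := ppos_eq hσ hp1n
    rw [h, ← hpdef] at h2
    omega
  have hxnk : πa (p+1) ≠ -(k:ℤ) := by
    intro h
    have hposnk : ppos n πa (-(k:ℤ)) = p+1 := by
      rw [← h]
      exact ppos_eq hσ hp1n
    have hsuba : (Vf n).filter (fun v => |v| ≤ (k:ℤ))
        ⊆ insert (-(k:ℤ)) ((Vf n).filter (fun v => |v| ≤ (k:ℤ) ∧ ppos n πa v ≤ p)) := by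
      intro v hv
      rw [Finset.mem_filter] at hv
      rw [Finset.mem_insert, Finset.mem_filter]
      by_cases hvk : v = -(k:ℤ)
      · exact Or.inl hvk
      · right
        refine ⟨hv.1, hv.2, ?_⟩
        have := pos_max hπa (k := (k:ℤ)) (by exact_mod_cast hk1) (by exact_mod_cast hk2)
          hv.1 hv.2 hvk
        rw [hposnk] at this
        omega
    have hc1 := Finset.card_le_card hsuba
    have hc2 := Finset.card_insert_le (-(k:ℤ))
      ((Vf n).filter (fun v => |v| ≤ (k:ℤ) ∧ ppos n πa v ≤ p))
    omega
  -- the index swap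
  set e : ℕ → ℕ := fun q => if q = p then p+1 else if q = p+1 then p else q with hedef
  have heval : ∀ q, e q = if q = p then p+1 else if q = p+1 then p else q := fun q => rfl
  have hee : ∀ q, e (e q) = q := by
    intro q
    rw [heval, heval]
    split_ifs <;> omega
  have he2n : ∀ q, q < 2*n → e q < 2*n := by
    intro q hq
    rw [heval]
    split_ifs <;> omega
  set ρ : ℕ → ℤ := fun q => πa (e q) with hρdef
  have hρ : ∀ q, ρ q = πa (e q) := fun q => rfl
  have hρp : ρ p = πa (p+1) := by
    rw [hρ p, heval p, if_pos rfl]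
  have hρp1 : ρ (p+1) = (k:ℤ) := by
    rw [hρ (p+1), heval (p+1), if_neg (by omega), if_pos rfl, hp.2]
  have hρo : ∀ q, q ≠ p → q ≠ p+1 → ρ q = πa q := by
    intro q h1 h2
    rw [hρ q, heval q, if_neg h1, if_neg h2]
  -- sign permutation
  have hσρ : IsSgnPerm n ρ := by
    have himg : (Finset.range (2*n)).image ρ = (Finset.range (2*n)).image πa := by
      ext v
      simp only [Finset.mem_image, Finset.mem_range]
      constructor
      · rintro ⟨q, hq, rfl⟩
        exact ⟨e q, he2n q hq, (hρ q).symm⟩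
      · rintro ⟨q, hq, rfl⟩
        refine ⟨e q, he2n q hq, ?_⟩
        rw [hρ (e q), hee]
    show (Finset.range (2*n)).image ρ = (Finset.Icc (-(n:ℤ)) (n:ℤ)).erase 0
    rw [himg]
    exact hσ
  -- standard permutation
  have hstdρ : IsStdPerm n ρ := by
    refine ⟨hσρ, ?_, ?_⟩
    · intro q l hq hl hpos heq
      by_cases hcross : q = p+1 ∧ l = p
      · obtain ⟨rfl, rfl⟩ := hcross
        exfalso
        apply hxnk
        rw [hρp, hρp1] at heq
        exact heq
      · rw [hρ q] at hpos
        rw [hρ l, hρ q] at heq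
        have h := hπa.2.1 (e q) (e l) (he2n q hq) (he2n l hl) hpos heq
        rw [heval q, heval l] at h
        split_ifs at h <;> omega
    · intro q l hq hl h1 h2
      have hq' : q ≠ p + 1 := by
        intro h
        rw [h, hρp1] at h1
        omega
      have hl' : l ≠ p + 1 := by
        intro h
        rw [h, hρp1] at h2
        omega
      rw [hρ q] at h1
      rw [hρ l] at h2
      have h := hπa.2.2 (e q) (e l) (he2n q hq) (he2n l hl) h1 h2
      rw [hρ l, hρ q, ← h, heval q, heval l]
      split_ifs <;> omega
  -- swap-invariance of counts
  have hcountA : ∀ P : ℕ, p+1 ≤ P → ∀ c : ℤ,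
      ((Finset.range (P+1)).filter (fun q => |ρ q| ≤ c)).card
        = ((Finset.range (P+1)).filter (fun q => |πa q| ≤ c)).card := by
    intro P hP c
    apply Finset.card_bij (fun q _ => e q)
    · intro q hq
      simp only [Finset.mem_filter, Finset.mem_range] at hq ⊢
      refine ⟨?_, ?_⟩
      · rw [heval q]
        split_ifs <;> omega
      · have := hq.2
        rwa [hρ q] at this
    · intro q hq q' hq' hqq
      have := congrArg e hqq
      rwa [hee, hee] at this
    · intro q' hq'
      simp only [Finset.mem_filter, Finset.mem_range] at hq'
      refine ⟨e q', ?_, hee q'⟩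
      simp only [Finset.mem_filter, Finset.mem_range]
      constructor
      · rw [heval q']
        split_ifs <;> omega
      · rw [hρ (e q'), hee]
        exact hq'.2
  -- ρ encodes b
  have hebρ : EncodesL n b ρ := by
    intro k' hk'1 hk'n p' hp'2n hρp'
    rw [hρ p'] at hρp'
    have hk'V : ((k':ℤ)) ∈ Vf n := nat_mem_Vf hk'1 hk'n
    have hpe : e p' = ppos n πa ((k':ℤ)) := by
      rw [← hρp']
      exact (ppos_eq hσ (he2n p' hp'2n)).symm
    by_cases hkk : k' = k
    · subst hkk
      have hpe2 : e p' = p := by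
        rw [hpe, ← hpdef]
      have hp'val : p' = p + 1 := by
        have h := congrArg e hpe2
        rw [hee] at h
        rw [h, heval p, if_pos rfl]
      rw [hp'val]
      rw [hcountA (p+1) (le_refl _) ((k':ℤ))]
      have hsplit : (Finset.range (p+1+1)).filter (fun q => |πa q| ≤ ((k':ℤ)))
          = insert (p+1) ((Finset.range (p+1)).filter (fun q => |πa q| ≤ ((k':ℤ)))) := by
        rw [Finset.range_add_one, Finset.filter_insert, if_pos hxabs]
      rw [hsplit, Finset.card_insert_of_notMem (by simp), ← hr]
      omega
    · have hppk : ppos n πa ((k':ℤ)) ≠ p := by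
        intro h
        have h2 : πa p = ((k':ℤ)) := by
          rw [← h]
          exact (ppos_spec hσ hk'V).2
        rw [hp.2] at h2
        exact hkk (by exact_mod_cast h2.symm)
      by_cases hxk' : πa (p+1) = ((k':ℤ))
      · have hxlt : |πa (p+1)| < (k:ℤ) := by
          rcases abs_cases (πa (p+1)) with ⟨he', _⟩ | ⟨he', _⟩ <;> omega
        have hk'ltk : ((k':ℤ)) < (k:ℤ) := by
          rw [hxk'] at hxlt
          rwa [abs_of_nonneg (by positivity)] at hxlt
        have hpe2 : e p' = p + 1 := by
          rw [hpe, ← hxk', ppos_eq hσ hp1n]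
        have hp'val : p' = p := by
          have h := congrArg e hpe2
          rw [hee] at h
          rw [h, heval (p+1), if_neg (by omega), if_pos rfl]
        rw [hp'val]
        have hwa : wd a k' = ((Finset.range (p+1+1)).filter (fun q => |πa q| ≤ ((k':ℤ)))).card :=
          hea k' hk'1 hk'n (p+1) hp1n hxk'
        rw [← hagree k' hk'1 hk'n hkk, hwa]
        have hxk'le : |πa (p+1)| ≤ ((k':ℤ)) := by
          rw [hxk', abs_of_nonneg (by positivity)]
        have hsplitA : (Finset.range (p+1+1)).filter (fun q => |πa q| ≤ ((k':ℤ)))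
            = insert (p+1) ((Finset.range p).filter (fun q => |πa q| ≤ ((k':ℤ)))) := by
          rw [Finset.range_add_one, Finset.filter_insert, if_pos hxk'le]
          congr 1
          rw [Finset.range_add_one, Finset.filter_insert, if_neg (by
            rw [hp.2, abs_of_nonneg (by positivity)]
            omega)]
        have hsplitB : (Finset.range (p+1)).filter (fun q => |ρ q| ≤ ((k':ℤ)))
            = insert p ((Finset.range p).filter (fun q => |ρ q| ≤ ((k':ℤ)))) := by
          rw [Finset.range_add_one, Finset.filter_insert, if_pos (by
            rw [hρp, hxk', abs_of_nonneg (by positivity)])]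
        have hsameρ : (Finset.range p).filter (fun q => |ρ q| ≤ ((k':ℤ)))
            = (Finset.range p).filter (fun q => |πa q| ≤ ((k':ℤ))) := by
          apply Finset.filter_congr
          intro q hq
          rw [Finset.mem_range] at hq
          rw [hρo q (by omega) (by omega)]
        rw [hsplitA, hsplitB, hsameρ, Finset.card_insert_of_notMem (by simp),
          Finset.card_insert_of_notMem (by simp)]
      · have hppk1 : ppos n πa ((k':ℤ)) ≠ p+1 := by
          intro h
          apply hxk'
          have := (ppos_spec hσ hk'V).2
          rwa [h] at this
        have hp'val : p' = ppos n πa ((k':ℤ)) := by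
          have h := congrArg e hpe
          rw [hee] at h
          rw [h, heval, if_neg hppk, if_neg hppk1]
        have hP2n : ppos n πa ((k':ℤ)) < 2*n := (ppos_spec hσ hk'V).1
        have hwa : wd a k' = ((Finset.range (ppos n πa ((k':ℤ)) + 1)).filter
            (fun q => |πa q| ≤ ((k':ℤ)))).card :=
          hea k' hk'1 hk'n _ hP2n (ppos_spec hσ hk'V).2
        rw [hp'val, ← hagree k' hk'1 hk'n hkk, hwa]
        rcases lt_or_ge (ppos n πa ((k':ℤ))) p with hPp | hPp
        · congr 1
          apply Finset.filter_congr
          intro q hq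
          rw [Finset.mem_range] at hq
          rw [hρo q (by omega) (by omega)]
        · have hPge : p + 1 ≤ ppos n πa ((k':ℤ)) := by omega
          exact (hcountA _ hPge ((k':ℤ))).symm
  -- conclude via uniqueness
  have hdet := word_determines hstdρ hπb hebρ heb
  refine ⟨p, hp1n, ?_, ?_, ?_, ?_⟩
  · rw [← hdet p (by omega), hρp]
  · rw [← hdet (p+1) hp1n, hρp1, hp.2]
  · rw [hp.2]
    exact fun h => hxk h.symm
  · intro q hq hq1 hq2
    rw [← hdet q hq, hρo q hq1 hq2]

end main

/-- Consecutive words in the full Gray code encode standard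
permutations differing by an adjacent transposition. -/
theorem stmt_16 (n m : ℕ) (a b : List ℕ)
    (ha : (grayCode n)[m]? = some a) (hb : (grayCode n)[m+1]? = some b)
    (πa πb : ℕ → ℤ) (hπa : IsStdPerm n πa) (hπb : IsStdPerm n πb)
    (hea : EncodesL n a πa) (heb : EncodesL n b πb) :
    AdjSwap n πa πb := by
  obtain ⟨k, hk1, hk2, hagree, hdiff, hext⟩ := gray_adj ha hb
  have hav := gray_valid (List.mem_of_getElem? ha)
  have hbv := gray_valid (List.mem_of_getElem? hb)
  rcases hdiff with h | h
  · exact main_swap hπa hea hπb heb hk1 hk2 hagree h (hbv k hk1 hk2).2 hext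
  · have hext' : ∀ j, k < j → j ≤ n → wd b j = 1 ∨ wd b j = 2*j - 1 := by
      intro j hj1 hj2
      rw [← hagree j (by omega) hj2 (by omega)]
      exact hext j hj1 hj2
    have hagree' : ∀ j, 1 ≤ j → j ≤ n → j ≠ k → wd b j = wd a j :=
      fun j h1 h2 h3 => (hagree j h1 h2 h3).symm
    obtain ⟨p, h1, h2, h3, h4, h5⟩ :=
      main_swap hπb heb hπa hea hk1 hk2 hagree' h (hav k hk1 hk2).2 hext'
    refine ⟨p, h1, h3.symm, h2.symm, ?_, fun q hq hq1 hq2 => (h5 q hq hq1 hq2).symm⟩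
    rw [h2, h3]
    exact fun hh => h4 hh.symm
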